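/- If X = S D Pᵀ is an SVD-like decomposition with S symplectic, P orthogonal and D of the stated block-diagonal form with positive diagonal entries σ_1,…,σ_p, then the rank of K = Xᵀ J_{2N} X equals 2p. -/

import Mathlib

open Matrix

/-- The canonical Poisson matrix `J_{2N} = [[0, I_N], [-I_N, 0]]`. -/
def PoissonMatrix (N : ℕ) : Matrix (Fin N ⊕ Fin N) (Fin N ⊕ Fin N) ℝ :=
  Matrix.fromBlocks 0 1 (-1) 0

/-- The block matrix `D ∈ ℝ^{2N×n_s}` of the SVD-like decomposition, whose transpose has the
block form `Dᵀ = [[Σ,0,0,0,0],[0,I_q,0,0,0],[0,0,0,Σ,0],[0,0,0,0,0]]` with column partition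
`(p, q, N−p−q, p, N−p)`, row partition `(p, q, p, n_s−2p−q)` and `Σ = diag(σ_0, …, σ_{p-1})`. -/
def SVDlikeD (N ns p q : ℕ) (σ : ℕ → ℝ) : Matrix (Fin N ⊕ Fin N) (Fin ns) ℝ :=
  fun a i => match a with
  | Sum.inl a => if (a : ℕ) = (i : ℕ) ∧ (a : ℕ) < p then σ a
      else if (a : ℕ) = (i : ℕ) ∧ p ≤ (a : ℕ) ∧ (a : ℕ) < p + q then 1 else 0
  | Sum.inr a => if (a : ℕ) < p ∧ (i : ℕ) = (a : ℕ) + p + q then σ a else 0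

def Kmat (ns p q : ℕ) (σ : ℕ → ℝ) : Matrix (Fin ns) (Fin ns) ℝ :=
  fun i j => if (i:ℕ) < p ∧ (j:ℕ) = (i:ℕ)+p+q then σ i * σ i
    else if (j:ℕ) < p ∧ (i:ℕ) = (j:ℕ)+p+q then -(σ j * σ j) else 0


lemma JD (N ns p q : ℕ) (σ : ℕ → ℝ) :
    PoissonMatrix N * SVDlikeD N ns p q σ =
      fun a j => match a with
      | Sum.inl a => SVDlikeD N ns p q σ (Sum.inr a) j
      | Sum.inr a => -(SVDlikeD N ns p q σ (Sum.inl a) j) := by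
  ext a j
  cases a with
  | inl a =>
    simp [PoissonMatrix, Matrix.mul_apply, Fintype.sum_sum_type, fromBlocks, one_apply,
      ite_mul, Finset.sum_ite_eq]
  | inr a =>
    simp [PoissonMatrix, Matrix.mul_apply, Fintype.sum_sum_type, fromBlocks, one_apply,
      ite_mul, Finset.sum_ite_eq]

lemma sum_fin_eq_cond (n c : ℕ) (v : ℝ) :
    ∑ a : Fin n, (if (a : ℕ) = c then v else 0) = if c < n then v else 0 := by
  rw [Fin.sum_univ_eq_sum_range (fun k => if k = c then v else 0) n]
  rw [Finset.sum_ite_eq' (Finset.range n) c (fun _ => v)]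
  simp

lemma DJD (N ns p q : ℕ) (hpq : p + q ≤ N) (σ : ℕ → ℝ) :
    (SVDlikeD N ns p q σ)ᵀ * PoissonMatrix N * SVDlikeD N ns p q σ = Kmat ns p q σ := by
  rw [Matrix.mul_assoc, JD]
  ext i j
  erw [Matrix.mul_apply]
  rw [Fintype.sum_sum_type]
  simp only [transpose_apply, SVDlikeD]
  have h1 : ∀ a : Fin N,
      (if (a:ℕ) = (i:ℕ) ∧ (a:ℕ) < p then σ a
        else if (a:ℕ) = (i:ℕ) ∧ p ≤ (a:ℕ) ∧ (a:ℕ) < p + q then 1 else 0) *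
      (if (a:ℕ) < p ∧ (j:ℕ) = (a:ℕ) + p + q then σ a else 0) =
      if (a:ℕ) = (i:ℕ) then
        (if (i:ℕ) < p ∧ (j:ℕ) = (i:ℕ) + p + q then σ (i:ℕ) * σ (i:ℕ) else 0) else 0 := by
    intro a
    rcases eq_or_ne (a:ℕ) (i:ℕ) with h | h
    · simp only [h]
      split_ifs <;> first | ring1 | omega | tauto
    · simp only [h]
      split_ifs <;> first | ring1 | omega | tauto
  have h2 : ∀ a : Fin N,
      (if (a:ℕ) < p ∧ (i:ℕ) = (a:ℕ) + p + q then σ a else 0) *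
      (-(if (a:ℕ) = (j:ℕ) ∧ (a:ℕ) < p then σ a
        else if (a:ℕ) = (j:ℕ) ∧ p ≤ (a:ℕ) ∧ (a:ℕ) < p + q then 1 else 0)) =
      if (a:ℕ) = (j:ℕ) then
        (if (j:ℕ) < p ∧ (i:ℕ) = (j:ℕ) + p + q then -(σ (j:ℕ) * σ (j:ℕ)) else 0) else 0 := by
    intro a
    rcases eq_or_ne (a:ℕ) (j:ℕ) with h | h
    · simp only [h]
      split_ifs <;> first | ring1 | omega | tauto
    · simp only [h]
      split_ifs <;> first | ring1 | omega | tauto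
  rw [Finset.sum_congr rfl (fun a _ => h1 a), Finset.sum_congr rfl (fun a _ => h2 a),
    sum_fin_eq_cond, sum_fin_eq_cond, Kmat]
  split_ifs <;> first | ring1 | omega | tauto

lemma sum_two_point (n c d : ℕ) (x y : ℝ) :
    ∑ a : Fin n, (if (a:ℕ) = c then x else 0) * (if (a:ℕ) = d then y else 0) =
      if c = d ∧ c < n then x * y else 0 := by
  have h : ∀ a : Fin n, (if (a:ℕ) = c then x else 0) * (if (a:ℕ) = d then y else 0) =
      if (a:ℕ) = c then (if c = d then x * y else 0) else 0 := by
    intro a; split_ifs <;> first | ring1 | omega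
  rw [Finset.sum_congr rfl (fun a _ => h a), sum_fin_eq_cond]
  split_ifs <;> first | rfl | omega

lemma col1 (ns p q : ℕ) (σ : ℕ → ℝ) (i k : Fin ns) (hi : (i:ℕ) < p) :
    Kmat ns p q σ k i = if (k:ℕ) = (i:ℕ)+p+q then -(σ i * σ i) else 0 := by
  simp only [Kmat]
  rcases eq_or_ne (k:ℕ) ((i:ℕ)+p+q) with hk | hk
  · rw [if_neg (by omega), if_pos ⟨hi, hk⟩, if_pos hk]
  · rw [if_neg (by omega), if_neg (by omega), if_neg hk]

lemma col2 (ns p q : ℕ) (σ : ℕ → ℝ) (i k : Fin ns) (h : p+q ≤ (i:ℕ)) (h' : (i:ℕ) < p+q+p) :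
    Kmat ns p q σ k i = if (k:ℕ) = (i:ℕ)-(p+q) then σ ((i:ℕ)-(p+q)) * σ ((i:ℕ)-(p+q)) else 0 := by
  simp only [Kmat]
  rcases eq_or_ne (k:ℕ) ((i:ℕ)-(p+q)) with hk | hk
  · rw [if_pos (by omega), if_pos hk, hk]
  · rw [if_neg (by omega), if_neg (by omega), if_neg hk]

lemma col3 (ns p q : ℕ) (σ : ℕ → ℝ) (i k : Fin ns) (h : ¬ (i:ℕ) < p)
    (h' : ¬ (p+q ≤ (i:ℕ) ∧ (i:ℕ) < p+q+p)) :
    Kmat ns p q σ k i = 0 := by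
  simp only [Kmat]
  rw [if_neg (by omega), if_neg (by omega)]

def wdiag (ns p q : ℕ) (σ : ℕ → ℝ) : Fin ns → ℝ := fun i =>
  if (i:ℕ) < p then (σ i * σ i) * (σ i * σ i)
  else if p+q ≤ (i:ℕ) ∧ (i:ℕ) < p+q+p then
    (σ ((i:ℕ)-(p+q)) * σ ((i:ℕ)-(p+q))) * (σ ((i:ℕ)-(p+q)) * σ ((i:ℕ)-(p+q)))
  else 0

lemma KtK (ns p q : ℕ) (hns : 2*p+q ≤ ns) (σ : ℕ → ℝ) :
    (Kmat ns p q σ)ᵀ * Kmat ns p q σ = Matrix.diagonal (wdiag ns p q σ) := by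
  ext i j
  rw [Matrix.mul_apply]
  simp only [transpose_apply, Matrix.diagonal_apply, wdiag]
  by_cases hi3 : ¬ (i:ℕ) < p ∧ ¬ (p+q ≤ (i:ℕ) ∧ (i:ℕ) < p+q+p)
  · rw [Finset.sum_congr rfl (fun k _ => by
      rw [col3 ns p q σ i k hi3.1 hi3.2, zero_mul]), Finset.sum_const_zero]
    rcases eq_or_ne i j with rfl | hij
    · rw [if_pos rfl, if_neg hi3.1, if_neg hi3.2]
    · rw [if_neg hij]
  · by_cases hj3 : ¬ (j:ℕ) < p ∧ ¬ (p+q ≤ (j:ℕ) ∧ (j:ℕ) < p+q+p)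
    · rw [Finset.sum_congr rfl (fun k _ => by
        rw [col3 ns p q σ j k hj3.1 hj3.2, mul_zero]), Finset.sum_const_zero]
      rcases eq_or_ne i j with rfl | hij
      · rw [if_pos rfl, if_neg hj3.1, if_neg hj3.2]
      · rw [if_neg hij]
    · push_neg at hi3 hj3
      rcases eq_or_ne i j with rfl | hij
      · rw [if_pos rfl]
        by_cases hi : (i:ℕ) < p
        · rw [Finset.sum_congr rfl (fun k _ => by rw [col1 ns p q σ i k hi]),
            sum_two_point, if_pos ⟨rfl, by omega⟩, if_pos hi]
          ring
        · have h2 : p+q ≤ (i:ℕ) ∧ (i:ℕ) < p+q+p := hi3 (by omega)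
          rw [Finset.sum_congr rfl (fun k _ => by rw [col2 ns p q σ i k h2.1 h2.2]),
            sum_two_point, if_pos ⟨rfl, by omega⟩, if_neg hi, if_pos h2]
      · rw [if_neg hij]
        have hijv : (i:ℕ) ≠ (j:ℕ) := fun h => hij (Fin.ext h)
        by_cases hi : (i:ℕ) < p <;> by_cases hj : (j:ℕ) < p
        · rw [Finset.sum_congr rfl (fun k _ => by rw [col1 ns p q σ i k hi, col1 ns p q σ j k hj]),
            sum_two_point, if_neg (by omega)]
        · have h2 : p+q ≤ (j:ℕ) ∧ (j:ℕ) < p+q+p := hj3 (by omega)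
          rw [Finset.sum_congr rfl (fun k _ => by
            rw [col1 ns p q σ i k hi, col2 ns p q σ j k h2.1 h2.2]),
            sum_two_point, if_neg (by omega)]
        · have h2 : p+q ≤ (i:ℕ) ∧ (i:ℕ) < p+q+p := hi3 (by omega)
          rw [Finset.sum_congr rfl (fun k _ => by
            rw [col2 ns p q σ i k h2.1 h2.2, col1 ns p q σ j k hj]),
            sum_two_point, if_neg (by omega)]
        · have h2 : p+q ≤ (i:ℕ) ∧ (i:ℕ) < p+q+p := hi3 (by omega)
          have h2' : p+q ≤ (j:ℕ) ∧ (j:ℕ) < p+q+p := hj3 (by omega)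
          rw [Finset.sum_congr rfl (fun k _ => by
            rw [col2 ns p q σ i k h2.1 h2.2, col2 ns p q σ j k h2'.1 h2'.2]),
            sum_two_point, if_neg (by omega)]

lemma card_w (ns p q : ℕ) (hns : 2*p+q ≤ ns) (σ : ℕ → ℝ) (hσ : ∀ i < p, 0 < σ i) :
    Fintype.card {i : Fin ns // wdiag ns p q σ i ≠ 0} = 2*p := by
  have hiff : ∀ i : Fin ns, (wdiag ns p q σ i ≠ 0) ↔
      ((i:ℕ) < p ∨ (p+q ≤ (i:ℕ) ∧ (i:ℕ) < p+q+p)) := by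
    intro i
    unfold wdiag
    by_cases hi : (i:ℕ) < p
    · have := hσ (i:ℕ) hi
      rw [if_pos hi]
      constructor
      · intro _; exact Or.inl hi
      · intro _; positivity
    · rw [if_neg hi]
      by_cases h2 : p+q ≤ (i:ℕ) ∧ (i:ℕ) < p+q+p
      · have := hσ ((i:ℕ)-(p+q)) (by omega)
        rw [if_pos h2]
        constructor
        · intro _; exact Or.inr h2
        · intro _; positivity
      · rw [if_neg h2]
        simp only [ne_eq, not_true_eq_false, false_iff]  -- ¬¬0=0 ↔ ...
        omega
  rw [Fintype.card_congr (Equiv.subtypeEquivRight hiff)]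
  rw [Fintype.card_subtype]
  rw [Finset.card_filter]
  rw [Fin.sum_univ_eq_sum_range (fun k => if k < p ∨ (p+q ≤ k ∧ k < p+q+p) then 1 else 0) ns]
  rw [← Finset.card_filter]
  have hset : (Finset.range ns).filter (fun k => k < p ∨ (p+q ≤ k ∧ k < p+q+p)) =
      Finset.range p ∪ Finset.Ico (p+q) (p+q+p) := by
    ext k
    simp only [Finset.mem_filter, Finset.mem_range, Finset.mem_union, Finset.mem_Ico]
    omega
  rw [hset, Finset.card_union_of_disjoint (by
    simp only [Finset.disjoint_left, Finset.mem_range, Finset.mem_Ico]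
    omega)]
  rw [Finset.card_range, Nat.card_Ico]
  omega

theorem stmt_10 {N ns p q : ℕ} (hpq : p + q ≤ N) (hns : 2 * p + q ≤ ns)
    (σ : ℕ → ℝ) (hσ : ∀ i < p, 0 < σ i)
    (S : Matrix (Fin N ⊕ Fin N) (Fin N ⊕ Fin N) ℝ)
    (hS : Sᵀ * PoissonMatrix N * S = PoissonMatrix N)
    (P : Matrix (Fin ns) (Fin ns) ℝ) (hP : Pᵀ * P = 1)
    (X : Matrix (Fin N ⊕ Fin N) (Fin ns) ℝ)
    (hX : X = S * SVDlikeD N ns p q σ * Pᵀ) :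
    (Xᵀ * PoissonMatrix N * X).rank = 2 * p := by
  set D := SVDlikeD N ns p q σ with hD
  have e0 : Xᵀ * PoissonMatrix N * X
      = P * (Dᵀ * ((Sᵀ * (PoissonMatrix N * S)) * (D * Pᵀ))) := by
    rw [hX]
    simp only [transpose_mul, transpose_transpose, Matrix.mul_assoc]
  have hS' : Sᵀ * (PoissonMatrix N * S) = PoissonMatrix N := by
    rw [← Matrix.mul_assoc, hS]
  rw [hS'] at e0
  have e1 : P * (Dᵀ * (PoissonMatrix N * (D * Pᵀ))) = P * (Kmat ns p q σ * Pᵀ) := by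
    rw [← DJD N ns p q hpq σ]
    simp only [Matrix.mul_assoc, hD]
  rw [e0, e1]
  have hdet : IsUnit P.det := by
    apply IsUnit.of_mul_eq_one Pᵀ.det
    rw [mul_comm, ← Matrix.det_mul, hP, Matrix.det_one]
  have hdetT : IsUnit Pᵀ.det := by
    apply IsUnit.of_mul_eq_one P.det
    rw [← Matrix.det_mul, hP, Matrix.det_one]
  rw [Matrix.rank_mul_eq_right_of_isUnit_det P _ hdet,
    Matrix.rank_mul_eq_left_of_isUnit_det Pᵀ _ hdetT,
    ← Matrix.rank_transpose_mul_self, KtK ns p q hns σ, Matrix.rank_diagonal,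
    card_w ns p q hns σ hσ]
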